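/- Let Θ ∈ ℝ^K and let Σ be a positive definite K×K real matrix. Fix i ∈ {1,…,K}, set σ_i = √(Σ_{ii}), b_{ij} = (Θ_j − Θ_i)/√(Σ_{ii} + Σ_{jj} − 2Σ_{ij}) for j ≠ i, and let R_i be the K×K matrix with unit diagonal, (R_i)_{ij} = (Σ_{ii} − Σ_{ij})/(σ_i·√(Σ_{ii} + Σ_{jj} − 2Σ_{ij})) for j ≠ i, and (R_i)_{jj'} = (Σ_{ii} − Σ_{ij'} − Σ_{ij} + Σ_{jj'})/(√(Σ_{ii} + Σ_{jj} − 2Σ_{ij})·√(Σ_{ii} + Σ_{j'j'} − 2Σ_{ij'})) for j, j' ≠ i. Then for every natural number r, ∫_{A_i} x_i^r · φ_K(x; Θ, Σ) dx = ∫_{{z ∈ ℝ^K : z_l < b_{il} for all l ≠ i}} (Θ_i + σ_i z_i)^r · φ_K(z; 0, R_i) dz. -/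

import Mathlib

open MeasureTheory ProbabilityTheory Real Matrix

/-- `regionA K i` is the set of points of `ℝ^K` where coordinate `i` is the strict minimum. -/
def regionA (K : ℕ) (i : Fin K) : Set (Fin K → ℝ) :=
  {x | ∀ j, j ≠ i → x i < x j}

/-- Multivariate normal density `φ_K(x; m, Σ)` on `ι → ℝ`. -/
noncomputable def mvNormalPDF {ι : Type*} [Fintype ι] [DecidableEq ι]
    (m : ι → ℝ) (S : Matrix ι ι ℝ) (x : ι → ℝ) : ℝ :=
  ((2 * π) ^ (Fintype.card ι) * S.det) ^ (-(1 : ℝ) / 2) *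
    Real.exp (-((x - m) ⬝ᵥ (S⁻¹ *ᵥ (x - m))) / 2)

/-- Multivariate normal measure `N(m, Σ)`, given by its density w.r.t. Lebesgue measure. -/
noncomputable def mvGaussian {ι : Type*} [Fintype ι] [DecidableEq ι]
    (m : ι → ℝ) (S : Matrix ι ι ℝ) : Measure (ι → ℝ) :=
  volume.withDensity fun x => ENNReal.ofReal (mvNormalPDF m S x)

/-- `√(Σ_ii + Σ_jj − 2Σ_ij)`, the standard deviation of `X_i − X_j`. -/
noncomputable def sdev {K : ℕ} (S : Matrix (Fin K) (Fin K) ℝ) (i j : Fin K) : ℝ :=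
  Real.sqrt (S i i + S j j - 2 * S i j)

/-- The correlation matrix `R_i` of the standardized vector `Z`. -/
noncomputable def Rmat {K : ℕ} (S : Matrix (Fin K) (Fin K) ℝ) (i : Fin K) :
    Matrix (Fin K) (Fin K) ℝ :=
  Matrix.of fun j j' =>
    if j = j' then 1
    else if j = i then (S i i - S i j') / (Real.sqrt (S i i) * sdev S i j')
    else if j' = i then (S i i - S i j) / (Real.sqrt (S i i) * sdev S i j)
    else (S i i - S i j' - S i j + S j j') / (sdev S i j * sdev S i j')

/-- The truncation bounds `b_ij = (Θ_j − Θ_i)/√(Σ_ii + Σ_jj − 2Σ_ij)`. -/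
noncomputable def bvec {K : ℕ} (Θ : Fin K → ℝ) (S : Matrix (Fin K) (Fin K) ℝ)
    (i j : Fin K) : ℝ :=
  (Θ j - Θ i) / sdev S i j

/-- `m_j(Z_i)`, the `j`-th marginal moment of the truncated standardized multivariate normal:
`∫_{z_l < b_il, l ≠ i} z_i^j φ_K(z; 0, R_i) dz`. -/
noncomputable def truncMoment {K : ℕ} (Θ : Fin K → ℝ) (S : Matrix (Fin K) (Fin K) ℝ)
    (i : Fin K) (j : ℕ) : ℝ :=
  ∫ z in {z : Fin K → ℝ | ∀ l, l ≠ i → z l < bvec Θ S i l},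
    (z i) ^ j * mvNormalPDF 0 (Rmat S i) z

lemma sum_ite_two {α : Type*} [Fintype α] [DecidableEq α] {i j : α} (h : i ≠ j) (a b : ℝ)
    (v : α → ℝ) :
    ∑ l, (if l = i then a else if l = j then b else 0) * v l = a * v i + b * v j := by
  have e : ∀ l, (if l = i then a else if l = j then b else 0) * v l
      = (if l = i then a * v l else 0) + (if l = j then b * v l else 0) := by
    intro l
    by_cases h1 : l = i <;> by_cases h2 : l = j <;> subst_vars <;> simp_all
  simp [e, Finset.sum_add_distrib, Finset.sum_ite_eq']

lemma sum_ite_one {α : Type*} [Fintype α] [DecidableEq α] (i : α) (a : ℝ) (v : α → ℝ) :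
    ∑ l, (if l = i then a else 0) * v l = a * v i := by
  have e : ∀ l, (if l = i then a else 0) * v l = (if l = i then a * v l else 0) := by
    intro l; by_cases h1 : l = i <;> simp_all
  simp [e, Finset.sum_ite_eq']

/-- The standardizing matrix. -/
noncomputable def Amat {K : ℕ} (S : Matrix (Fin K) (Fin K) ℝ) (i : Fin K) :
    Matrix (Fin K) (Fin K) ℝ :=
  Matrix.of fun j l =>
    if j = i then (if l = i then 1 / Real.sqrt (S i i) else 0)
    else if l = i then 1 / sdev S i j else if l = j then -(1 / sdev S i j) else 0

section facts
variable {K : ℕ} {S : Matrix (Fin K) (Fin K) ℝ} (hS : S.PosDef) (i : Fin K)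

include hS in
lemma quad_pos (v : Fin K → ℝ) (hv : v ≠ 0) : 0 < v ⬝ᵥ S *ᵥ v := by
  simpa using hS.dotProduct_mulVec_pos hv

include hS in
lemma Ssymm (a b : Fin K) : S a b = S b a := by
  have := congrFun (congrFun hS.1 a) b
  simpa [Matrix.conjTranspose_apply] using this.symm

include hS in
lemma diag_pos : 0 < S i i := by
  have h := quad_pos hS (Pi.single i 1) (by
    intro h; have := congrFun h i; simp at this)
  simpa [single_dotProduct, Matrix.mulVec_single] using h

include hS in
lemma diff_pos {j : Fin K} (hj : j ≠ i) : 0 < S i i + S j j - 2 * S i j := by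
  have hv : (Pi.single i 1 - Pi.single j 1 : Fin K → ℝ) ≠ 0 := by
    intro h
    have := congrFun h i
    simp [Pi.single_apply, hj.symm] at this
  have h := quad_pos hS _ hv
  have e : (Pi.single i 1 - Pi.single j 1 : Fin K → ℝ) ⬝ᵥ S *ᵥ (Pi.single i 1 - Pi.single j 1)
      = S i i - S j i - S i j + S j j := by
    simp [Matrix.mulVec_sub, sub_dotProduct, dotProduct_sub,
      single_dotProduct, Matrix.mulVec_single]
    ring
  rw [e] at h
  have := Ssymm hS i j
  linarith

include hS in
lemma sdev_pos {j : Fin K} (hj : j ≠ i) : 0 < sdev S i j :=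
  Real.sqrt_pos.2 (diff_pos hS i hj)

include hS in
lemma sdev_sq {j : Fin K} (hj : j ≠ i) : sdev S i j * sdev S i j = S i i + S j j - 2 * S i j :=
  Real.mul_self_sqrt (diff_pos hS i hj).le

include hS in
lemma sqrtσ_sq : Real.sqrt (S i i) * Real.sqrt (S i i) = S i i :=
  Real.mul_self_sqrt (diag_pos hS i).le

end facts

section key
variable {K : ℕ} {S : Matrix (Fin K) (Fin K) ℝ} (hS : S.PosDef) (i : Fin K)

lemma Amat_mulVec_i (w : Fin K → ℝ) :
    (Amat S i *ᵥ w) i = (1 / Real.sqrt (S i i)) * w i := by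
  simpa [Matrix.mulVec, dotProduct, Amat] using
    sum_ite_one i (1 / Real.sqrt (S i i)) w

lemma Amat_mulVec_ne {j : Fin K} (hj : j ≠ i) (w : Fin K → ℝ) :
    (Amat S i *ᵥ w) j = (w i - w j) / sdev S i j := by
  have := sum_ite_two (Ne.symm hj) (1 / sdev S i j) (-(1 / sdev S i j)) w
  simp only [Matrix.mulVec, dotProduct, Amat, Matrix.of_apply, if_neg hj]
  rw [this]; ring

lemma Amat_row (j : Fin K) :
    Amat S i j = if j = i then (1 / Real.sqrt (S i i)) • (Pi.single i 1 : Fin K → ℝ)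
      else (1 / sdev S i j) • ((Pi.single i 1 : Fin K → ℝ) - Pi.single j 1) := by
  funext l
  by_cases hj : j = i <;> by_cases hl : l = i <;>
      simp [Amat, hj, hl, Pi.single_apply]
  by_cases hlj : l = j <;> simp [hlj, Ne.symm]

lemma mul_mul_transpose_apply (A B : Matrix (Fin K) (Fin K) ℝ) (j j' : Fin K) :
    (A * B * Aᵀ) j j' = (A j) ⬝ᵥ (B *ᵥ (A j')) := by
  simp only [Matrix.mul_apply, Matrix.transpose_apply, dotProduct, Matrix.mulVec,
    Finset.sum_mul, Finset.mul_sum]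
  rw [Finset.sum_comm]
  apply Finset.sum_congr rfl; intro k _
  apply Finset.sum_congr rfl; intro l _
  ring

include hS in
lemma ASA_eq : Amat S i * S * (Amat S i)ᵀ = Rmat S i := by
  have hii := diag_pos hS i
  have hσ0 : Real.sqrt (S i i) ≠ 0 := by positivity
  have hσs := sqrtσ_sq hS i
  ext j j'
  rw [mul_mul_transpose_apply, Amat_row, Amat_row]
  by_cases hj : j = i <;> by_cases hj' : j' = i
  · subst hj; subst hj'
    simp [Rmat, smul_dotProduct, dotProduct_smul, Matrix.mulVec_smul,
      single_dotProduct, Matrix.mulVec_single, smul_eq_mul]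
    try field_simp
    try linarith [hσs]
  · subst hj
    have hs0 : sdev S j j' ≠ 0 := (sdev_pos hS j hj').ne'
    have h1 : ¬ j = j' := fun h => hj' h.symm
    simp [Rmat, h1, hj', smul_dotProduct, dotProduct_smul, Matrix.mulVec_smul,
      Matrix.mulVec_sub, dotProduct_sub,
      single_dotProduct, Matrix.mulVec_single, smul_eq_mul]
    field_simp
    try ring
    try tauto
  · subst hj'
    have hs0 : sdev S j' j ≠ 0 := (sdev_pos hS j' hj).ne'
    simp [Rmat, hj, smul_dotProduct, dotProduct_smul, Matrix.mulVec_smul,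
      Matrix.mulVec_sub, sub_dotProduct,
      single_dotProduct, Matrix.mulVec_single, smul_eq_mul]
    rw [Ssymm hS j j']
    field_simp
    try ring
    try tauto
  · have hs0 : sdev S i j ≠ 0 := (sdev_pos hS i hj).ne'
    have hs'0 : sdev S i j' ≠ 0 := (sdev_pos hS i hj').ne'
    by_cases hjj : j = j'
    · subst hjj
      have hsq := sdev_sq hS i hj
      simp [Rmat, hj, smul_dotProduct, dotProduct_smul, Matrix.mulVec_smul,
        Matrix.mulVec_sub, sub_dotProduct, dotProduct_sub,
        single_dotProduct, Matrix.mulVec_single, smul_eq_mul]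
      rw [Ssymm hS j i]
      try field_simp
      try linarith [hsq]
    · simp [Rmat, hj, hj', hjj, smul_dotProduct, dotProduct_smul,
        Matrix.mulVec_smul, Matrix.mulVec_sub, sub_dotProduct, dotProduct_sub,
        single_dotProduct, Matrix.mulVec_single, smul_eq_mul]
      rw [Ssymm hS j i]
      field_simp
      ring

include hS in
lemma Amat_det_ne : (Amat S i).det ≠ 0 := by
  rw [Ne, ← Matrix.exists_mulVec_eq_zero_iff]
  rintro ⟨v, hv, hAv⟩
  have hii := diag_pos hS i
  have hσ0 : Real.sqrt (S i i) ≠ 0 := (Real.sqrt_pos.2 hii).ne'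
  have hvi : v i = 0 := by
    have h := congrFun hAv i
    rw [Amat_mulVec_i] at h
    field_simp at h
    simpa using h
  apply hv
  funext l
  by_cases hl : l = i
  · subst hl; simpa using hvi
  · have h := congrFun hAv l
    rw [Amat_mulVec_ne i hl] at h
    have hs0 : sdev S i l ≠ 0 := (sdev_pos hS i hl).ne'
    have h2 : v i - v l = 0 := by
      rw [Pi.zero_apply, div_eq_zero_iff] at h
      tauto
    simp only [Pi.zero_apply]
    linarith

end key


/-- Change of variables: the integral of `x_i^r φ_K(x;Θ,Σ)` over the region `A_i` equals the
integral of `(Θ_i + σ_i z_i)^r φ_K(z;0,R_i)` over `{z : z_l < b_il for all l ≠ i}`. -/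
theorem setIntegral_regionA_eq_truncated
    {K : ℕ} (Θ : Fin K → ℝ) (S : Matrix (Fin K) (Fin K) ℝ) (hS : S.PosDef)
    (i : Fin K) (r : ℕ) :
    ∫ x in regionA K i, (x i) ^ r * mvNormalPDF Θ S x
      = ∫ z in {z : Fin K → ℝ | ∀ l, l ≠ i → z l < bvec Θ S i l},
          (Θ i + Real.sqrt (S i i) * z i) ^ r * mvNormalPDF 0 (Rmat S i) z := by
  classical
  have hii := diag_pos hS i
  have hσ0 : Real.sqrt (S i i) ≠ 0 := (Real.sqrt_pos.2 hii).ne'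
  set A := Amat S i with hA
  have hdet : A.det ≠ 0 := Amat_det_ne hS i
  have hdetu : IsUnit A.det := isUnit_iff_ne_zero.2 hdet
  have hdetTu : IsUnit Aᵀ.det := by rwa [Matrix.det_transpose]
  have hR : Rmat S i = A * S * Aᵀ := (ASA_eq hS i).symm
  have hAAinv : A * A⁻¹ = 1 := Matrix.mul_nonsing_inv _ hdetu
  have hAinvA : A⁻¹ * A = 1 := Matrix.nonsing_inv_mul _ hdetu
  have hATinv : Aᵀ * (Aᵀ)⁻¹ = 1 := Matrix.mul_nonsing_inv _ hdetTu
  have hRinv : Aᵀ * ((Rmat S i)⁻¹ * A) = S⁻¹ := by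
    rw [hR, Matrix.mul_inv_rev, Matrix.mul_inv_rev]
    simp only [Matrix.mul_assoc]
    rw [hAinvA, Matrix.mul_one, ← Matrix.mul_assoc, hATinv, Matrix.one_mul]
  have hquad : ∀ w : Fin K → ℝ,
      (A *ᵥ w) ⬝ᵥ ((Rmat S i)⁻¹ *ᵥ (A *ᵥ w)) = w ⬝ᵥ S⁻¹ *ᵥ w := by
    intro w
    rw [Matrix.mulVec_mulVec]
    have h1 : A *ᵥ w = w ᵥ* Aᵀ := by
      rw [← Matrix.mulVec_transpose, Matrix.transpose_transpose]
    rw [h1, Matrix.dotProduct_mulVec, Matrix.vecMul_vecMul, hRinv, ← Matrix.dotProduct_mulVec]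
  have hdetR : (Rmat S i).det = A.det * S.det * A.det := by
    rw [hR, Matrix.det_mul, Matrix.det_mul, Matrix.det_transpose]
  set f : (Fin K → ℝ) → (Fin K → ℝ) := fun x => A *ᵥ (x - Θ) with hf
  set L : (Fin K → ℝ) →L[ℝ] (Fin K → ℝ) :=
    LinearMap.toContinuousLinearMap (Matrix.toLin' A) with hL
  have hLdet : L.det = A.det := by
    rw [ContinuousLinearMap.det]
    simp [hL, LinearMap.det_toLin']
  have hfderiv : ∀ x, HasFDerivAt f L x := by
    intro x
    have hfe : f = fun y => L y - A *ᵥ Θ := by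
      funext y
      simp [hf, hL, Matrix.mulVec_sub, Matrix.toLin'_apply]
    rw [hfe]
    exact (L.hasFDerivAt).sub_const _
  have hinj : Function.Injective f := by
    have h := Matrix.mulVec_injective_iff_isUnit.2 ((Matrix.isUnit_iff_isUnit_det A).2 hdetu)
    intro x y hxy
    have h2 : x - Θ = y - Θ := h hxy
    simpa using congrArg (· + Θ) h2
  have hmeas : MeasurableSet (regionA K i) := by
    have he : regionA K i = ⋂ (j) (_ : j ≠ i), {x : Fin K → ℝ | x i < x j} := by
      ext x; simp [regionA]
    rw [he]
    exact MeasurableSet.iInter fun j => MeasurableSet.iInter fun _ =>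
      measurableSet_lt (measurable_pi_apply i) (measurable_pi_apply j)
  have hmem : ∀ x, x ∈ regionA K i ↔ ∀ l, l ≠ i → f x l < bvec Θ S i l := by
    intro x
    have key : ∀ l, l ≠ i → (f x l < bvec Θ S i l ↔ x i < x l) := by
      intro l hl
      have hs := sdev_pos hS i hl
      have hfl : f x l = ((x - Θ) i - (x - Θ) l) / sdev S i l := Amat_mulVec_ne i hl _
      rw [hfl, bvec, div_lt_div_iff₀ hs hs]
      simp only [Pi.sub_apply]
      constructor <;> intro h <;> nlinarith [hs]
    constructor
    · intro hx l hl; exact (key l hl).2 (hx l hl)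
    · intro hx l hl; exact (key l hl).1 (hx l hl)
  have himg : f '' regionA K i = {z : Fin K → ℝ | ∀ l, l ≠ i → z l < bvec Θ S i l} := by
    ext z
    constructor
    · rintro ⟨x, hx, rfl⟩
      exact (hmem x).1 hx
    · intro hz
      have hfz : f (Θ + A⁻¹ *ᵥ z) = z := by
        simp only [hf, add_sub_cancel_left, Matrix.mulVec_mulVec, hAAinv, Matrix.one_mulVec]
      exact ⟨Θ + A⁻¹ *ᵥ z, (hmem _).2 (by rw [hfz]; exact hz), hfz⟩
  rw [← himg,
    integral_image_eq_integral_abs_det_fderiv_smul volume hmeas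
      (fun x _ => (hfderiv x).hasFDerivWithinAt) hinj.injOn
      (fun z => (Θ i + Real.sqrt (S i i) * z i) ^ r * mvNormalPDF 0 (Rmat S i) z)]
  refine setIntegral_congr_fun hmeas (fun x _ => ?_)
  have h1 : Θ i + Real.sqrt (S i i) * f x i = x i := by
    have he : f x i = (1 / Real.sqrt (S i i)) * (x - Θ) i := by
      rw [hf]; exact Amat_mulVec_i i (x - Θ)
    rw [he]
    simp only [Pi.sub_apply]
    field_simp
    ring
  have hcard : Fintype.card (Fin K) = K := Fintype.card_fin K
  have hdS := hS.det_pos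
  have habs : |A.det| ≠ 0 := abs_ne_zero.2 hdet
  have hc : |A.det| * ((2 * π) ^ K * (Rmat S i).det) ^ (-(1:ℝ)/2)
      = ((2 * π) ^ K * S.det) ^ (-(1:ℝ)/2) := by
    rw [hdetR]
    have e1 : (2 * π) ^ K * (A.det * S.det * A.det)
        = ((2 * π) ^ K * S.det) * (|A.det| * |A.det|) := by
      rw [abs_mul_abs_self]; ring
    rw [e1, Real.mul_rpow (by positivity) (mul_self_nonneg _)]
    have e2 : (|A.det| * |A.det|) ^ (-(1:ℝ)/2) = |A.det|⁻¹ := by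
      have h2 : |A.det| * |A.det| = |A.det| ^ (2:ℝ) := by
        have h3 := Real.rpow_natCast |A.det| 2
        rw [show ((2:ℕ):ℝ) = (2:ℝ) by norm_num] at h3
        rw [h3, pow_two]
      rw [h2, ← Real.rpow_mul (abs_nonneg _)]
      norm_num
      exact Real.rpow_neg_one _
    rw [e2, mul_comm (((2 * π) ^ K * S.det) ^ (-(1:ℝ)/2)), ← mul_assoc,
      mul_inv_cancel₀ habs, one_mul]
  rw [hLdet, smul_eq_mul, h1]
  have h2 : mvNormalPDF 0 (Rmat S i) (f x)
      = ((2 * π) ^ K * (Rmat S i).det) ^ (-(1:ℝ)/2)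
        * Real.exp (-((x - Θ) ⬝ᵥ S⁻¹ *ᵥ (x - Θ)) / 2) := by
    simp only [mvNormalPDF, hcard, sub_zero, hf]
    rw [hquad]
  rw [h2]
  simp only [mvNormalPDF, hcard]
  rw [← hc]
  ring
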